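/- Let O be a one-dimensional Noetherian local integral domain with finite normalization R in its fraction field, and let a ∈ O be a nonzero element with aR ⊆ O. Then length_O(O/aO) + length_O(R/O) = length_O(R/aR) + length_O(aR/aO), and length_O(aR/aO) = length_O(R/O); consequently length_O(O/aO) = length_O(R/aR). -/

import Mathlib

/-!
STATEMENT 8. `O` is a one-dimensional Noetherian local integral domain, `F` its
fraction field and `R` its normalization, i.e. the integral closure of `O` in `F`
(characterized by the hypotheses `hinj` and `hint`), assumed finite over `O`;
`a ∈ O` is a nonzero element with `aR ⊆ O`.  All lengths are lengths of
`O`-modules, encoded as the Krull dimension of the submodule lattice.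
Conclusion: `length(O/aO) + length(R/O) = length(R/aR) + length(aR/aO)`, and
`length(aR/aO) = length(R/O)`; consequently `length(O/aO) = length(R/aR)`.
-/

/-- The length of a module, encoded as the Krull dimension (longest chain length)
of its submodule lattice. -/
noncomputable def moduleLength (R M : Type*) [CommRing R] [AddCommGroup M]
    [Module R M] : WithBot ℕ∞ :=
  Order.krullDim (Submodule R M)

open Order IsLocalRing

section OrderLemmas

variable {α β : Type*} [Preorder α] [Preorder β]

lemma aux_height_add_one_le {x y : α} (h : x < y) : height x + 1 ≤ height y := by
  rw [height_eq_iSup_lt_height y]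
  exact le_iSup₂ (f := fun z (_ : z < y) => height z + 1) x h

lemma aux_krullDim_Iic (a : α) :
    krullDim {x : α // x ≤ a} = (height a : WithBot ℕ∞) := by
  have : Nonempty {x : α // x ≤ a} := ⟨⟨a, le_rfl⟩⟩
  rw [krullDim_eq_iSup_length, WithBot.coe_inj]
  apply le_antisymm
  · apply iSup_le
    intro p
    have := length_le_height (p := p.map Subtype.val (fun _ _ h => h))
      (x := a) (p.last.2)
    exact this
  · apply height_le
    intro p hp
    have hle : ∀ i, p i ≤ a := fun i => le_of_le_of_eq (p.monotone (Fin.le_last i)) hp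
    exact le_iSup_of_le (LTSeries.mk p.length (fun i => ⟨p i, hle i⟩)
      (fun i j hij => p.strictMono hij)) le_rfl

lemma aux_krullDim_Ici (a : α) :
    krullDim {x : α // a ≤ x} = (coheight a : WithBot ℕ∞) := by
  have : Nonempty {x : α // a ≤ x} := ⟨⟨a, le_rfl⟩⟩
  rw [krullDim_eq_iSup_length, WithBot.coe_inj]
  apply le_antisymm
  · apply iSup_le
    intro p
    have := length_le_coheight (p := p.map Subtype.val (fun _ _ h => h))
      (x := a) (p.head.2)
    exact this
  · apply coheight_le
    intro p hp
    have hle : ∀ i, a ≤ p i := fun i => le_of_eq_of_le hp.symm (p.monotone (Fin.zero_le i))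
    exact le_iSup_of_le (LTSeries.mk p.length (fun i => ⟨p i, hle i⟩)
      (fun i j hij => p.strictMono hij)) le_rfl

lemma aux_prod_length_le (p : LTSeries (α × β)) :
    (p.length : ℕ∞) ≤ height p.last.1 + height p.last.2 := by
  suffices h : ∀ i : Fin (p.length + 1), (i.val : ℕ∞) ≤ height (p i).1 + height (p i).2 by
    simpa [RelSeries.last] using h (Fin.last _)
  intro i
  induction i using Fin.induction with
  | zero => simp
  | succ i ih =>
    have hlt := p.step i
    have : (i.succ.val : ℕ∞) = i.val + 1 := by push_cast [Fin.val_succ]; simp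
    rw [this]
    rcases Prod.lt_iff.mp hlt with ⟨h1, h2⟩ | ⟨h1, h2⟩
    · calc (i.val : ℕ∞) + 1 ≤ (height (p i.castSucc).1 + height (p i.castSucc).2) + 1 :=
            add_le_add_left ih 1
        _ = (height (p i.castSucc).1 + 1) + height (p i.castSucc).2 := by ring
        _ ≤ height (p i.succ).1 + height (p i.succ).2 :=
            add_le_add (aux_height_add_one_le h1) (height_mono h2)
    · calc (i.val : ℕ∞) + 1 ≤ (height (p i.castSucc).1 + height (p i.castSucc).2) + 1 :=
            add_le_add_left ih 1
        _ = height (p i.castSucc).1 + (height (p i.castSucc).2 + 1) := by ring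
        _ ≤ height (p i.succ).1 + height (p i.succ).2 :=
            add_le_add (height_mono h1) (aux_height_add_one_le h2)

end OrderLemmas

section ModuleLength

variable {R M : Type*} [CommRing R] [AddCommGroup M] [Module R M]

lemma moduleLength_congr {N : Type*} [AddCommGroup N] [Module R N] (e : M ≃ₗ[R] N) :
    moduleLength R M = moduleLength R N :=
  krullDim_eq_of_orderIso (Submodule.orderIsoMapComap e)

lemma moduleLength_additive (N : Submodule R M) :
    moduleLength R M = moduleLength R N + moduleLength R (M ⧸ N) := by
  have hN : moduleLength R N = (height N : WithBot ℕ∞) := by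
    rw [moduleLength, krullDim_eq_of_orderIso (Submodule.MapSubtype.orderIso N),
      aux_krullDim_Iic N]
  have hQ : moduleLength R (M ⧸ N) = (coheight N : WithBot ℕ∞) := by
    rw [moduleLength, krullDim_eq_of_orderIso (Submodule.comapMkQRelIso N),
      show krullDim (Set.Ici N) = (coheight N : WithBot ℕ∞) from aux_krullDim_Ici N]
  rw [hN, hQ, ← WithBot.coe_add, moduleLength]
  apply le_antisymm
  · rw [krullDim_eq_iSup_length, WithBot.coe_le_coe]
    apply iSup_le
    intro p
    set f : Submodule R M → Submodule R ↥N × Submodule R (M ⧸ N) :=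
      fun p => (p.comap N.subtype, p.map N.mkQ) with hf
    have hmono : StrictMono f := Submodule.strictMono_comap_prod_map N
    have := aux_prod_length_le (p.map f hmono)
    simp only [LTSeries.last_map, RelSeries.length] at this ⊢
    refine le_trans (by simpa using this) (add_le_add ?_ ?_)
    · have h := height_le_krullDim (α := Submodule R ↥N) (f p.last).1
      rw [krullDim_eq_of_orderIso (Submodule.MapSubtype.orderIso N), aux_krullDim_Iic N] at h
      exact_mod_cast h
    · have h := height_le_krullDim (α := Submodule R (M ⧸ N)) (f p.last).2
      rw [krullDim_eq_of_orderIso (Submodule.comapMkQRelIso N),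
        show krullDim (Set.Ici N) = (coheight N : WithBot ℕ∞) from aux_krullDim_Ici N] at h
      exact_mod_cast h
  · rw [krullDim_eq_iSup_height_add_coheight_of_nonempty, WithBot.coe_le_coe]
    exact le_iSup (fun a => height a + coheight a) N

lemma krullDim_le_one_of_simpleOrder {γ : Type*} [PartialOrder γ] [BoundedOrder γ]
    [IsSimpleOrder γ] : krullDim γ ≤ 1 := by
  apply iSup_le
  intro p
  suffices h : p.length ≤ 1 by exact_mod_cast Nat.cast_le.mpr h
  by_contra hc
  push_neg at hc
  have h2 : 2 ≤ p.length := hc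
  have h01 : p ⟨0, by omega⟩ < p ⟨1, by omega⟩ := p.strictMono (by simp [Fin.lt_def])
  have h12 : p ⟨1, by omega⟩ < p ⟨2, by omega⟩ := p.strictMono (by simp [Fin.lt_def])
  rcases IsSimpleOrder.eq_bot_or_eq_top (p ⟨1, by omega⟩) with h | h
  · exact absurd (h ▸ h01) (by simp)
  · exact absurd (h ▸ h12) (by simp)

lemma moduleLength_ne_top_of_isFiniteLength (h : IsFiniteLength R M) :
    moduleLength R M ≠ ⊤ := by
  induction h with
  | of_subsingleton =>
    rename_i M _ _ _
    have : Subsingleton (Submodule R M) := by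
      constructor; intro p q
      have : ∀ (r : Submodule R M), r = ⊥ := fun r => by
        ext x; simp [Subsingleton.elim x 0]
      rw [this p, this q]
    intro hc
    have := krullDim_nonpos_of_subsingleton (α := Submodule R M)
    rw [moduleLength] at hc
    rw [hc] at this
    exact absurd this (by decide)
  | of_simple_quotient hN ihN =>
    rename_i M _ _ N _
    rw [moduleLength_additive N]
    have h1 : moduleLength R (M ⧸ N) ≤ 1 := krullDim_le_one_of_simpleOrder
    intro hc
    obtain ⟨m, hm⟩ : ∃ m : ℕ∞, moduleLength R ↥N = ↑m :=
      ⟨_, krullDim_eq_iSup_length⟩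
    obtain ⟨n, hn⟩ : ∃ n : ℕ∞, moduleLength R (M ⧸ N) = ↑n :=
      ⟨_, krullDim_eq_iSup_length⟩
    rw [hm, hn, ← WithBot.coe_add] at hc
    have htop : m + n = ⊤ := by exact_mod_cast hc
    rcases WithTop.add_eq_top.mp htop with h | h
    · exact ihN (by rw [hm, h]; rfl)
    · rw [hn, h] at h1
      exact absurd h1 (by decide)

end ModuleLength

section Artinian

variable {O : Type} [CommRing O] [IsLocalRing O]

lemma artinian_of_torsion_by_max (M : Type) [AddCommGroup M] [Module O M]
    [Module.Finite O M]
    (h : ∀ c : O, c ∈ maximalIdeal O → ∀ x : M, c • x = 0) : IsArtinian O M := by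
  have htor : Module.IsTorsionBySet O M (maximalIdeal O : Set O) := by
    intro x c
    exact h c.1 c.2 x
  letI : Module (O ⧸ maximalIdeal O) M := htor.module
  haveI : IsScalarTower O (O ⧸ maximalIdeal O) M := htor.isScalarTower
  haveI : Module.Finite (O ⧸ maximalIdeal O) M :=
    Module.Finite.of_restrictScalars_finite O _ _
  letI : Field (O ⧸ maximalIdeal O) := Ideal.Quotient.field _
  haveI : IsArtinian (O ⧸ maximalIdeal O) M := inferInstance
  rw [isArtinian_iff]
  set g : Submodule O M → Submodule (O ⧸ maximalIdeal O) M := fun p =>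
    { carrier := p
      add_mem' := fun hx hy => p.add_mem hx hy
      zero_mem' := p.zero_mem
      smul_mem' := by
        intro c x hx
        obtain ⟨o, rfl⟩ := Ideal.Quotient.mk_surjective c
        have : (Ideal.Quotient.mk (maximalIdeal O) o) • x = o • x := by
          rw [← Ideal.Quotient.algebraMap_eq, algebraMap_smul]
        rw [this]
        exact p.smul_mem o hx } with hg
  have hmono : StrictMono g := by
    intro p q hpq
    refine lt_of_le_of_ne (fun x hx => hpq.le hx) (fun hEq => hpq.ne ?_)
    ext x
    exact SetLike.ext_iff.mp hEq x
  have wf : WellFounded ((· < ·) : Submodule (O ⧸ maximalIdeal O) M →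
      Submodule (O ⧸ maximalIdeal O) M → Prop) :=
    (isArtinian_iff _ _).mp inferInstance
  exact Subrelation.wf (fun {p q} hpq => hmono hpq) (InvImage.wf g wf)

lemma artinian_of_pow_max_smul [IsNoetherianRing O] :
    ∀ (k : ℕ) (M : Type) [AddCommGroup M] [Module O M], Module.Finite O M →
      (maximalIdeal O) ^ k • (⊤ : Submodule O M) = ⊥ → IsArtinian O M := by
  intro k
  induction k with
  | zero =>
    intro M _ _ _ hbot
    rw [pow_zero, Ideal.one_eq_top, Submodule.top_smul] at hbot
    haveI : Subsingleton M := by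
      constructor
      intro x y
      have hx : x ∈ (⊤ : Submodule O M) := trivial
      have hy : y ∈ (⊤ : Submodule O M) := trivial
      rw [hbot] at hx hy
      simp only [Submodule.mem_bot] at hx hy
      rw [hx, hy]
    infer_instance
  | succ k ih =>
    intro M _ _ hfin hbot
    haveI : IsNoetherian O M := inferInstance
    set N : Submodule O M := maximalIdeal O • ⊤ with hN
    haveI hNfin : Module.Finite O ↥N := inferInstance
    have h1 : (maximalIdeal O) ^ k • (⊤ : Submodule O ↥N) = ⊥ := by
      apply Submodule.map_injective_of_injective N.injective_subtype
      rw [Submodule.map_smul'', Submodule.map_bot, Submodule.map_top, Submodule.range_subtype,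
        hN, ← Submodule.smul_assoc, Ideal.smul_eq_mul, ← pow_succ]
      exact hbot
    have hartN : IsArtinian O ↥N := ih ↥N hNfin h1
    have hartQ : IsArtinian O (M ⧸ N) := by
      apply artinian_of_torsion_by_max
      intro c hc y
      obtain ⟨x, rfl⟩ := Submodule.Quotient.mk_surjective N y
      rw [← Submodule.Quotient.mk_smul, Submodule.Quotient.mk_eq_zero]
      exact Submodule.smul_mem_smul hc trivial
    exact (isArtinian_iff_submodule_quotient N).mpr ⟨hartN, hartQ⟩

lemma artinian_of_smul_eq_zero [IsNoetherianRing O] [IsDomain O]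
    (hdim : ringKrullDim O = 1) (a : O) (ha : a ≠ 0)
    (M : Type) [AddCommGroup M] [Module O M] [Module.Finite O M]
    (hM : ∀ x : M, a • x = 0) : IsArtinian O M := by
  by_cases hu : IsUnit a
  · haveI : Subsingleton M := by
      constructor
      intro x y
      obtain ⟨u, rfl⟩ := hu
      have hx := hM x
      have hy := hM y
      calc x = ((u⁻¹ : Oˣ) : O) • (u : O) • x := by
            rw [smul_smul]; simp
        _ = ((u⁻¹ : Oˣ) : O) • (u : O) • y := by rw [hx, hy]
        _ = y := by rw [smul_smul]; simp
    infer_instance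
  · have hamem : a ∈ maximalIdeal O := hu
    have hprime : ∀ p : Ideal O, p.IsPrime → Ideal.span {a} ≤ p → p = maximalIdeal O := by
      intro p hp hle
      by_contra hne
      have hpm : p < maximalIdeal O :=
        lt_of_le_of_ne (le_maximalIdeal hp.ne_top) hne
      have hbp : (⊥ : Ideal O) < p := by
        refine bot_lt_iff_ne_bot.mpr (fun h => ha ?_)
        have : a ∈ p := hle (Ideal.subset_span rfl)
        rw [h] at this
        simpa using this
      let s : LTSeries (PrimeSpectrum O) :=
        RelSeries.mk 2
          (![⟨⊥, Ideal.bot_prime⟩, ⟨p, hp⟩, ⟨maximalIdeal O, (maximalIdeal.isMaximal O).isPrime⟩] :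
            Fin 3 → PrimeSpectrum O)
          (by
            intro i
            fin_cases i
            · exact hbp
            · exact hpm)
      have hlen := Order.LTSeries.length_le_krullDim s
      rw [← ringKrullDim, hdim] at hlen
      have h2 : ((2 : ℕ) : WithBot ℕ∞) ≤ 1 := hlen
      exact absurd h2 (by decide)
    have hrad : maximalIdeal O ≤ (Ideal.span {a}).radical := by
      intro x hx
      rw [Ideal.radical_eq_sInf, Ideal.mem_sInf]
      rintro p ⟨hle, hp⟩
      rw [hprime p hp hle]
      exact hx
    obtain ⟨k, hk⟩ := Ideal.exists_pow_le_of_le_radical_of_fg hrad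
      (IsNoetherian.noetherian _)
    apply artinian_of_pow_max_smul k M ‹_›
    apply le_bot_iff.mp
    refine le_trans (Submodule.smul_mono_left hk) ?_
    rw [Submodule.smul_le]
    rintro r hr n -
    obtain ⟨c, rfl⟩ := Ideal.mem_span_singleton'.mp hr
    rw [mul_smul]
    rw [hM n, smul_zero]
    exact Submodule.zero_mem ⊥

end Artinian


section
open Order IsLocalRing

theorem length_comparison_with_normalization
    (O : Type) [CommRing O] [IsDomain O] [IsNoetherianRing O] [IsLocalRing O]
    (hdim : ringKrullDim O = 1)
    (F : Type) [Field F] [Algebra O F] [IsFractionRing O F]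
    (R : Type) [CommRing R] [Algebra O R] [Algebra R F] [IsScalarTower O R F]
    -- `R` is the integral closure (normalization) of `O` in `F`
    (hinj : Function.Injective (algebraMap R F))
    (hint : ∀ x : F, IsIntegral O x ↔ ∃ r : R, algebraMap R F r = x)
    [Module.Finite O R]
    (a : O) (ha : a ≠ 0)
    -- `aR ⊆ O`: multiplication by `a` maps `R` into `O`
    (haR : ∀ r : R, algebraMap O R a * r ∈ LinearMap.range (Algebra.linearMap O R)) :
    -- `aR` and `aO` as `O`-submodules of `R`
    ∀ (aR aO : Submodule O R),
      aR = Submodule.restrictScalars O (Ideal.span {algebraMap O R a}) →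
      aO = Submodule.map (Algebra.linearMap O R)
        (Submodule.restrictScalars O (Ideal.span {a})) →
      (moduleLength O (O ⧸ Ideal.span {a}) +
          moduleLength O (R ⧸ LinearMap.range (Algebra.linearMap O R)) =
        moduleLength O (R ⧸ aR) +
          moduleLength O (↥aR ⧸ aO.comap aR.subtype)) ∧
      moduleLength O (↥aR ⧸ aO.comap aR.subtype) =
        moduleLength O (R ⧸ LinearMap.range (Algebra.linearMap O R)) ∧
      moduleLength O (O ⧸ Ideal.span {a}) = moduleLength O (R ⧸ aR) := by
  intro aR aO haRdef haOdef
  haveI : IsDomain R := Function.Injective.isDomain (algebraMap R F) hinj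
  set O' : Submodule O R := LinearMap.range (Algebra.linearMap O R) with hO'
  set α : R := algebraMap O R a with hα
  -- basic facts
  have hOR : Function.Injective (algebraMap O R) := by
    intro x y hxy
    apply IsFractionRing.injective O F
    rw [IsScalarTower.algebraMap_eq O R F]
    simp only [RingHom.comp_apply, hxy]
  have hα0 : α ≠ 0 := fun h => ha (hOR (by rw [map_zero]; exact h))
  have mem_aR : ∀ x : R, x ∈ aR ↔ α ∣ x := by
    intro x
    rw [haRdef, Submodule.restrictScalars_mem, Ideal.mem_span_singleton]
  have mem_aO : ∀ x : R, x ∈ aO ↔ ∃ c ∈ Ideal.span ({a} : Set O), algebraMap O R c = x := by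
    intro x
    rw [haOdef, Submodule.mem_map]
    constructor
    · rintro ⟨c, hc, rfl⟩; exact ⟨c, hc, rfl⟩
    · rintro ⟨c, hc, rfl⟩; exact ⟨c, hc, rfl⟩
  have hαmem : ∀ x : R, α * x ∈ aR := fun x => (mem_aR _).mpr ⟨x, rfl⟩
  have haO_le_aR : aO ≤ aR := by
    intro x hx
    obtain ⟨c, hc, rfl⟩ := (mem_aO x).mp hx
    obtain ⟨d, rfl⟩ := Ideal.mem_span_singleton.mp hc
    rw [mem_aR, map_mul]
    exact Dvd.intro _ rfl
  have haR_le_O' : aR ≤ O' := by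
    intro x hx
    obtain ⟨s, rfl⟩ := (mem_aR x).mp hx
    exact haR s
  have haO_le_O' : aO ≤ O' := le_trans haO_le_aR haR_le_O'
  have key : ∀ x : R, α * x ∈ aO ↔ x ∈ O' := by
    intro x
    constructor
    · intro hx
      obtain ⟨c, hc, hcx⟩ := (mem_aO _).mp hx
      obtain ⟨d, rfl⟩ := Ideal.mem_span_singleton.mp hc
      rw [map_mul, ← hα] at hcx
      exact ⟨d, (mul_left_cancel₀ hα0 hcx.symm).symm⟩
    · rintro ⟨o, rfl⟩
      refine (mem_aO _).mpr ⟨a * o, Ideal.mem_span_singleton.mpr ⟨o, rfl⟩, ?_⟩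
      rw [map_mul]
      rfl
  -- Q := R ⧸ aO and the two submodules A, B of Q
  set A : Submodule O (R ⧸ aO) := aR.map aO.mkQ with hA
  set B : Submodule O (R ⧸ aO) := O'.map aO.mkQ with hB
  -- equivalence aR ⧸ (aO ∩ aR) ≃ A
  have eA : (↥aR ⧸ aO.comap aR.subtype) ≃ₗ[O] ↥A := by
    set ψ : ↥aR →ₗ[O] ↥A :=
      LinearMap.codRestrict A (aO.mkQ ∘ₗ aR.subtype)
        (fun x => Submodule.mem_map_of_mem x.2) with hψ
    have hker : LinearMap.ker ψ = aO.comap aR.subtype := by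
      rw [hψ, LinearMap.ker_codRestrict, LinearMap.ker_comp, Submodule.ker_mkQ]
    have hsurj : Function.Surjective ψ := by
      rintro ⟨y, hy⟩
      obtain ⟨x, hx, rfl⟩ := Submodule.mem_map.mp hy
      exact ⟨⟨x, hx⟩, rfl⟩
    exact (Submodule.quotEquivOfEq _ _ hker.symm).trans (ψ.quotKerEquivOfSurjective hsurj)
  -- equivalence O ⧸ (a) ≃ B
  have eB : (O ⧸ Ideal.span ({a} : Set O)) ≃ₗ[O] ↥B := by
    set ψ : O →ₗ[O] ↥B :=
      LinearMap.codRestrict B (aO.mkQ ∘ₗ Algebra.linearMap O R)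
        (fun o => Submodule.mem_map_of_mem ⟨o, rfl⟩) with hψ
    have hker : LinearMap.ker ψ = Submodule.restrictScalars O (Ideal.span ({a} : Set O)) := by
      ext o
      have hval : ((ψ o : ↥B) : R ⧸ aO) = Submodule.Quotient.mk (algebraMap O R o) := rfl
      rw [LinearMap.mem_ker, Subtype.ext_iff, hval, ZeroMemClass.coe_zero,
        Submodule.Quotient.mk_eq_zero, Submodule.restrictScalars_mem]
      constructor
      · intro hmem
        obtain ⟨c, hc, hco⟩ := (mem_aO _).mp hmem
        exact hOR hco ▸ hc
      · intro hmem
        exact (mem_aO _).mpr ⟨o, hmem, rfl⟩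
    have hsurj : Function.Surjective ψ := by
      rintro ⟨y, hy⟩
      obtain ⟨x, hx, rfl⟩ := Submodule.mem_map.mp hy
      obtain ⟨o, rfl⟩ := hx
      exact ⟨o, rfl⟩
    exact (Submodule.quotEquivOfEq _ _ hker.symm).trans (ψ.quotKerEquivOfSurjective hsurj)
  -- equivalence R ⧸ O' ≃ aR ⧸ (aO ∩ aR)  (multiplication by α)
  have e2 : (R ⧸ O') ≃ₗ[O] (↥aR ⧸ aO.comap aR.subtype) := by
    set μ : R →ₗ[O] R := LinearMap.mulLeft O α with hμ
    set φ : R →ₗ[O] (↥aR ⧸ aO.comap aR.subtype) :=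
      (aO.comap aR.subtype).mkQ ∘ₗ LinearMap.codRestrict aR μ hαmem with hφ
    have hker : LinearMap.ker φ = O' := by
      ext x
      have hval : φ x = Submodule.Quotient.mk (⟨α * x, hαmem x⟩ : ↥aR) := rfl
      rw [LinearMap.mem_ker, hval, Submodule.Quotient.mk_eq_zero, Submodule.mem_comap]
      exact key x
    have hsurj : Function.Surjective φ := by
      intro y
      obtain ⟨⟨z, hz⟩, rfl⟩ := Submodule.Quotient.mk_surjective _ y
      obtain ⟨s, rfl⟩ := (mem_aR z).mp hz
      exact ⟨s, rfl⟩
    exact (Submodule.quotEquivOfEq _ _ hker.symm).trans (φ.quotKerEquivOfSurjective hsurj)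
  -- third isomorphism theorem
  have eQA : ((R ⧸ aO) ⧸ A) ≃ₗ[O] (R ⧸ aR) :=
    Submodule.quotientQuotientEquivQuotient aO aR haO_le_aR
  have eQB : ((R ⧸ aO) ⧸ B) ≃ₗ[O] (R ⧸ O') :=
    Submodule.quotientQuotientEquivQuotient aO O' haO_le_O'
  -- the two decompositions of the length of R ⧸ aO
  have eq1 : moduleLength O (R ⧸ aO) =
      moduleLength O (↥aR ⧸ aO.comap aR.subtype) + moduleLength O (R ⧸ aR) := by
    rw [moduleLength_additive A, moduleLength_congr eA, moduleLength_congr eQA]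
  have eq2 : moduleLength O (R ⧸ aO) =
      moduleLength O (O ⧸ Ideal.span ({a} : Set O)) + moduleLength O (R ⧸ O') := by
    rw [moduleLength_additive B, moduleLength_congr eB, moduleLength_congr eQB]
  have eq3 : moduleLength O (↥aR ⧸ aO.comap aR.subtype) = moduleLength O (R ⧸ O') :=
    (moduleLength_congr e2).symm
  -- finiteness of the length of R ⧸ O'
  have hfin : moduleLength O (R ⧸ O') ≠ ⊤ := by
    haveI : IsNoetherian O R := inferInstance
    haveI : IsNoetherian O (R ⧸ O') := inferInstance
    haveI : Module.Finite O (R ⧸ O') := inferInstance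
    haveI : IsArtinian O (R ⧸ O') := by
      apply artinian_of_smul_eq_zero hdim a ha
      intro y
      obtain ⟨x, rfl⟩ := Submodule.Quotient.mk_surjective _ y
      rw [← Submodule.Quotient.mk_smul, Submodule.Quotient.mk_eq_zero]
      have : a • x = α * x := Algebra.smul_def a x
      rw [this]
      exact haR x
    exact moduleLength_ne_top_of_isFiniteLength
      (isFiniteLength_iff_isNoetherian_isArtinian.mpr ⟨inferInstance, inferInstance⟩)
  -- conclusion
  refine ⟨?_, eq3, ?_⟩
  · rw [eq3, ← eq2, eq1, add_comm, eq3]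
  · -- cancellation
    obtain ⟨x, hx⟩ : ∃ x : ℕ∞, moduleLength O (O ⧸ Ideal.span ({a} : Set O)) = ↑x :=
      ⟨_, Order.krullDim_eq_iSup_length⟩
    obtain ⟨y, hy⟩ : ∃ y : ℕ∞, moduleLength O (R ⧸ aR) = ↑y :=
      ⟨_, Order.krullDim_eq_iSup_length⟩
    obtain ⟨τ, hτ⟩ : ∃ τ : ℕ∞, moduleLength O (R ⧸ O') = ↑τ :=
      ⟨_, Order.krullDim_eq_iSup_length⟩
    have hτtop : τ ≠ ⊤ := fun h => hfin (by rw [hτ, h]; rfl)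
    have hxy : x + τ = τ + y := by
      have := eq2.symm.trans eq1
      rw [hx, hy, hτ, eq3, hτ, ← WithBot.coe_add, ← WithBot.coe_add] at this
      exact_mod_cast this
    rw [hx, hy, WithBot.coe_inj]
    rw [add_comm τ y] at hxy
    exact WithTop.add_right_cancel hτtop hxy

end
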